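/- arXiv:1701.04166 — 4 statements merged into one kernel-verified Lean document; each statement's English description precedes it below -/
import Mathlib

section
/- Tensor powers of linearly independent unit vectors remain linearly independent: if ψ₁,…,ψ_m are linearly independent vectors in a finite-dimensional complex Hilbert space H, then for every positive integer k the vectors ψ₁^{⊗k},…,ψ_m^{⊗k} in H^{⊗k} are linearly independent. -/
/-- Tensor powers of linearly independent vectors remain linearly independent. -/
theorem tensor_pow_linearIndependent {H : Type*} [NormedAddCommGroup H]
    [InnerProductSpace ℂ H] [FiniteDimensional ℂ H] {m : ℕ} (ψ : Fin m → H)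
    (h : LinearIndependent ℂ ψ) (k : ℕ) (hk : 0 < k) :
    LinearIndependent ℂ fun j : Fin m =>
      PiTensorProduct.tprod ℂ (fun _ : Fin k => ψ j) := by
  classical
  -- dual family
  set p := Submodule.span ℂ (Set.range ψ)
  obtain ⟨q, hq⟩ := Submodule.exists_isCompl p
  let proj : H →ₗ[ℂ] p := Submodule.linearProjOfIsCompl p q hq
  let b : Module.Basis (Fin m) ℂ p := Module.Basis.span h
  let f : Fin m → (H →ₗ[ℂ] ℂ) := fun j => (b.coord j).comp proj
  have hf : ∀ i j, f j (ψ i) = if i = j then 1 else 0 := by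
    intro i j
    have hmem : ψ i ∈ p := Submodule.subset_span ⟨i, rfl⟩
    have hproj : proj (ψ i) = ⟨ψ i, hmem⟩ :=
      Submodule.linearProjOfIsCompl_apply_left hq ⟨ψ i, hmem⟩
    have hspan : (⟨ψ i, hmem⟩ : p) = b i := by
      apply Subtype.ext
      exact congrArg Subtype.val (Module.Basis.span_apply h i).symm
    simp only [f, LinearMap.comp_apply, hproj, hspan, Module.Basis.coord_apply, Module.Basis.repr_self]
    by_cases hij : i = j <;> simp [hij, Finsupp.single_apply]
  let L : Fin m → (PiTensorProduct ℂ (fun _ : Fin k => H) →ₗ[ℂ] ℂ) := fun j =>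
    PiTensorProduct.lift ((MultilinearMap.mkPiAlgebra ℂ (Fin k) ℂ).compLinearMap fun _ => f j)
  have hL : ∀ i j, L j (PiTensorProduct.tprod ℂ (fun _ : Fin k => ψ i)) =
      if i = j then 1 else 0 := by
    intro i j
    simp only [L, PiTensorProduct.lift.tprod, MultilinearMap.compLinearMap_apply,
      MultilinearMap.mkPiAlgebra_apply, hf]
    by_cases hij : i = j
    · simp [hij]
    · simp [hij, Finset.prod_const, zero_pow hk.ne']
  rw [Fintype.linearIndependent_iff]
  intro c hc j
  have := congrArg (L j) hc
  simpa [map_sum, hL, Finset.sum_ite_eq'] using this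
end

section
/- No universal linear encoding of an unknown qubit with a fixed state exists: let α, β be nonzero complex numbers with |α|² + |β|² = 1. There is no linear isometry U on ℂ² ⊗ H_A ⊗ H_P, fixed ancilla unit vector Σ ∈ H_A, orthonormal vectors P₀, P₁ ∈ H_P, and positive probability p₀ > 0, such that for every unit vector ψ ∈ ℂ², U(ψ ⊗ Σ ⊗ P₀) = √p₀ · (normalized (αψ + β|0⟩)) ⊗ |0⟩_A ⊗ P₁ + √p₁ · Φ̃(ψ), where Φ̃(ψ) is orthogonal to the subspace ℂ² ⊗ H_A ⊗ span{P₁} and p₀ + p₁ = 1. -/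
/-- Elementary tensor `x ⊗ y ⊗ z` of Euclidean vectors, modeled pointwise. -/
noncomputable def tensor3 {ι κ σ : Type*} (x : EuclideanSpace ℂ ι)
    (y : EuclideanSpace ℂ κ) (z : EuclideanSpace ℂ σ) :
    EuclideanSpace ℂ (ι × κ × σ) :=
  WithLp.toLp 2 (fun q : ι × κ × σ => x q.1 * y q.2.1 * z q.2.2)

/-- Tensor `w ⊗ z` of a vector of the first two factors with a probe vector. -/
noncomputable def tensorLast {ι κ σ : Type*} (w : EuclideanSpace ℂ (ι × κ))
    (z : EuclideanSpace ℂ σ) : EuclideanSpace ℂ (ι × κ × σ) :=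
  WithLp.toLp 2 (fun q : ι × κ × σ => w (q.1, q.2.1) * z q.2.2)

open ComplexConjugate in
lemma inner_tensorLast_tensorLast {ι κ σ : Type*} [Fintype ι] [Fintype κ] [Fintype σ]
    (w w' : EuclideanSpace ℂ (ι × κ)) (z z' : EuclideanSpace ℂ σ) :
    (inner ℂ (tensorLast w z) (tensorLast w' z') : ℂ) =
      (inner ℂ w w' : ℂ) * (inner ℂ z z' : ℂ) := by
  simp only [tensorLast, PiLp.inner_apply, RCLike.inner_apply, map_mul,
    Fintype.sum_prod_type, Finset.sum_mul, Finset.mul_sum]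
  conv_rhs => rw [Finset.sum_comm]
  apply Finset.sum_congr rfl; intro i _
  conv_rhs => rw [Finset.sum_comm]
  apply Finset.sum_congr rfl; intro k _
  apply Finset.sum_congr rfl; intro s _
  ring

lemma tensor3_eq {ι κ σ : Type*} (x : EuclideanSpace ℂ ι) (y : EuclideanSpace ℂ κ)
    (z : EuclideanSpace ℂ σ) :
    tensor3 x y z = tensorLast (WithLp.toLp 2 (fun q : ι × κ => x q.1 * y q.2)) z := rfl

/-- No-encoding theorem: no universal linear isometry can linearly superpose an
unknown qubit state with the fixed state `|0⟩`, succeeding with probability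
`p₀ > 0` for every unit input (up to a global phase on the output). -/
theorem no_encoding {a p : ℕ} (α β : ℂ) (hα : α ≠ 0) (hβ : β ≠ 0)
    (hnorm : ‖α‖ ^ 2 + ‖β‖ ^ 2 = 1) :
    ¬ ∃ (U : EuclideanSpace ℂ (Fin 2 × Fin a × Fin p) →ₗᵢ[ℂ]
          EuclideanSpace ℂ (Fin 2 × Fin a × Fin p))
        (anc : EuclideanSpace ℂ (Fin a)) (P₀ P₁ : EuclideanSpace ℂ (Fin p))
        (a0 : EuclideanSpace ℂ (Fin a)) (p₀ p₁ : ℝ)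
        (Φ : EuclideanSpace ℂ (Fin 2) → EuclideanSpace ℂ (Fin 2 × Fin a × Fin p))
        (c : EuclideanSpace ℂ (Fin 2) → ℂ),
      ‖anc‖ = 1 ∧ ‖P₀‖ = 1 ∧ ‖P₁‖ = 1 ∧ (inner ℂ P₀ P₁ : ℂ) = 0 ∧ ‖a0‖ = 1 ∧
      0 < p₀ ∧ p₀ + p₁ = 1 ∧
      (∀ ψ (w : EuclideanSpace ℂ (Fin 2 × Fin a)),
        (inner ℂ (Φ ψ) (tensorLast w P₁) : ℂ) = 0) ∧
      (∀ ψ : EuclideanSpace ℂ (Fin 2), ‖ψ‖ = 1 →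
        ‖c ψ‖ = 1 ∧
        α • ψ + β • EuclideanSpace.single (0 : Fin 2) (1 : ℂ) ≠ 0 ∧
        U (tensor3 ψ anc P₀) = c ψ •
          (Real.sqrt p₀ •
            tensor3 ((‖α • ψ + β • EuclideanSpace.single (0 : Fin 2) (1 : ℂ)‖⁻¹ : ℝ) •
              (α • ψ + β • EuclideanSpace.single (0 : Fin 2) (1 : ℂ))) a0 P₁
           + Real.sqrt p₁ • Φ ψ)) := by
  rintro ⟨U, anc, P₀, P₁, a0, p₀, p₁, Φ, c, hanc, hP₀, hP₁, hP01, ha0, hp₀, hsum, hΦ, hU⟩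
  set e0 : EuclideanSpace ℂ (Fin 2) := EuclideanSpace.single (0 : Fin 2) (1 : ℂ) with he0
  set e1 : EuclideanSpace ℂ (Fin 2) := EuclideanSpace.single (1 : Fin 2) (1 : ℂ) with he1def
  have he1 : ‖e1‖ = 1 := by simp [he1def, EuclideanSpace.norm_single]
  have he1' : ‖(-e1 : EuclideanSpace ℂ (Fin 2))‖ = 1 := by rw [norm_neg]; exact he1
  obtain ⟨hc1, hv1, hU1⟩ := hU e1 he1
  obtain ⟨hc2, hv2, hU2⟩ := hU (-e1) he1'
  -- the ancilla has a nonzero coordinate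
  obtain ⟨j, hj⟩ : ∃ j, a0 j ≠ 0 := by
    by_contra h
    push_neg at h
    have : a0 = 0 := by ext i; simpa using h i
    rw [this] at ha0
    simp at ha0
  -- linearity: tensor3 (-e1) anc P₀ = - tensor3 e1 anc P₀
  have hten : tensor3 (-e1) anc P₀ = -(tensor3 e1 anc P₀) := by
    ext q
    simp [tensor3]
  have hUneg : U (tensor3 (-e1) anc P₀) = -(U (tensor3 e1 anc P₀)) := by
    rw [hten, map_neg]
  -- probe functional
  set T : Fin 2 → EuclideanSpace ℂ (Fin 2 × Fin a × Fin p) :=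
    fun i => tensorLast (EuclideanSpace.single (i, j) (1 : ℂ)) P₁ with hT
  have hinnerP₁ : (inner ℂ P₁ P₁ : ℂ) = 1 := by
    rw [inner_self_eq_norm_sq_to_K, hP₁]; norm_num
  have innerT : ∀ (i : Fin 2) (x : EuclideanSpace ℂ (Fin 2)),
      (inner ℂ (T i) (tensor3 x a0 P₁) : ℂ) = x i * a0 j := by
    intro i x
    rw [hT, tensor3_eq, inner_tensorLast_tensorLast, hinnerP₁,
      EuclideanSpace.inner_single_left]
    simp
  have innerTΦ : ∀ (i : Fin 2) (ψ : EuclideanSpace ℂ (Fin 2)),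
      (inner ℂ (T i) (Φ ψ) : ℂ) = 0 := by
    intro i ψ
    rw [← inner_conj_symm, hΦ ψ (EuclideanSpace.single (i, j) (1 : ℂ)), map_zero]
  -- compute inner products of the probe with both expressions
  have key : ∀ (i : Fin 2) (ψ : EuclideanSpace ℂ (Fin 2)) (hψu : ‖ψ‖ = 1),
      (inner ℂ (T i) (U (tensor3 ψ anc P₀)) : ℂ) =
        c ψ * ((Real.sqrt p₀ : ℂ) *
          (((‖α • ψ + β • e0‖⁻¹ : ℝ) : ℂ) * ((α • ψ + β • e0) i) * a0 j)) := by
    intro i ψ hψu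
    obtain ⟨_, _, hUψ⟩ := hU ψ hψu
    rw [hUψ]
    rw [RCLike.real_smul_eq_coe_smul (K := ℂ) (Real.sqrt p₀),
      RCLike.real_smul_eq_coe_smul (K := ℂ) (Real.sqrt p₁),
      RCLike.real_smul_eq_coe_smul (K := ℂ) (‖α • ψ + β • e0‖⁻¹)]
    rw [inner_smul_right, inner_add_right, inner_smul_right, inner_smul_right,
      innerTΦ, innerT]
    simp only [PiLp.smul_apply, smul_eq_mul]
    simp only [← RCLike.algebraMap_eq_ofReal (K := ℂ), Complex.coe_algebraMap]
    ring
  have key1 := fun i => key i e1 he1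
  have key2 := fun i => key i (-e1) he1'
  -- combine using U(-x) = -U(x)
  have keyeq : ∀ i : Fin 2,
      c e1 * ((Real.sqrt p₀ : ℂ) *
        (((‖α • e1 + β • e0‖⁻¹ : ℝ) : ℂ) * ((α • e1 + β • e0) i) * a0 j)) =
      -(c (-e1) * ((Real.sqrt p₀ : ℂ) *
        (((‖α • (-e1) + β • e0‖⁻¹ : ℝ) : ℂ) * ((α • (-e1) + β • e0) i) * a0 j))) := by
    intro i
    rw [← key1 i, ← key2 i, hUneg, inner_neg_right, neg_neg]
  -- coordinates of v₁, v₂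
  have hv₁0 : (α • e1 + β • e0) (0 : Fin 2) = β := by
    simp [he0, he1def, EuclideanSpace.single_apply]
  have hv₁1 : (α • e1 + β • e0) (1 : Fin 2) = α := by
    simp [he0, he1def, EuclideanSpace.single_apply]
  have hv₂0 : (α • (-e1) + β • e0) (0 : Fin 2) = β := by
    simp [he0, he1def, EuclideanSpace.single_apply]
  have hv₂1 : (α • (-e1) + β • e0) (1 : Fin 2) = -α := by
    simp [he0, he1def, EuclideanSpace.single_apply]
  set A : ℂ := c e1 * (Real.sqrt p₀ : ℂ) * ((‖α • e1 + β • e0‖⁻¹ : ℝ) : ℂ) * a0 j with hA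
  set B : ℂ := c (-e1) * (Real.sqrt p₀ : ℂ) * ((‖α • (-e1) + β • e0‖⁻¹ : ℝ) : ℂ) * a0 j with hB
  have eq0 : A * β = -(B * β) := by
    have := keyeq 0
    rw [hv₁0, hv₂0] at this
    rw [hA, hB]; linear_combination this
  have eq1 : A * α = B * α := by
    have := keyeq 1
    rw [hv₁1, hv₂1] at this
    rw [hA, hB]; linear_combination this
  have hAB1 : A = -B := by
    have h : (A + B) * β = 0 := by linear_combination eq0
    have := (mul_eq_zero.mp h).resolve_right hβ
    linear_combination this
  have hAB2 : A = B := by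
    have h : (A - B) * α = 0 := by linear_combination eq1
    have := (mul_eq_zero.mp h).resolve_right hα
    linear_combination this
  have hB0 : B = 0 := by
    have : B = -B := hAB2.symm.trans hAB1
    linear_combination this / 2
  have hc2ne : c (-e1) ≠ 0 := by
    intro h; rw [h] at hc2; simp at hc2
  have hs : (Real.sqrt p₀ : ℂ) ≠ 0 := by
    simp only [ne_eq, Complex.ofReal_eq_zero]
    exact ne_of_gt (Real.sqrt_pos.mpr hp₀)
  have hv2n : ((‖α • (-e1) + β • e0‖⁻¹ : ℝ) : ℂ) ≠ 0 := by
    simp only [ne_eq, Complex.ofReal_eq_zero, inv_eq_zero, norm_eq_zero]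
    exact hv2
  rw [hB] at hB0
  exact (mul_ne_zero (mul_ne_zero (mul_ne_zero hc2ne hs) hv2n) hj) hB0
end

section
/- Phase covariance forbids universal superposition with a fixed component: let α, β be complex with αβ ≠ 0 and |α|² + |β|² = 1, and Φ a fixed unit vector in H^{⊗n}. Suppose a linear map U on H^{⊗k} ⊗ H_A ⊗ H_P satisfies, for some unit vector φ ∈ H and all phases θ, that U((e^{iθ}φ)^{⊗k} ⊗ Σ ⊗ P₀) is proportional (nonzero scalar multiple) to √p₀·r(θ)^{1/2}(α e^{i n θ} φ^{⊗n} + β Φ) ⊗ w ⊗ P₁ + √p₁·Φ̃(θ) with Φ̃(θ) ⊥ (H^{⊗n} ⊗ H_A' ⊗ span{P₁}), p₀ > 0, and also U((e^{iθ}φ)^{⊗k} ⊗ Σ ⊗ P₀) = e^{ikθ} U(φ^{⊗k} ⊗ Σ ⊗ P₀). Then for all θ, the vectors α e^{inθ} φ^{⊗n} + β Φ and α φ^{⊗n} + β Φ are proportional, which forces β = 0 when φ^{⊗n} and Φ are linearly independent — a contradiction. -/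
/-- The `n`-fold tensor power `φ^{⊗n}` of a Euclidean vector, modeled pointwise. -/
noncomputable def tpow {d : ℕ} (n : ℕ) (φ : EuclideanSpace ℂ (Fin d)) :
    EuclideanSpace ℂ (Fin n → Fin d) :=
  WithLp.toLp 2 (fun f : Fin n → Fin d => ∏ i, φ (f i))

open scoped ComplexConjugate

lemma sum_factor3 {ι κ σ : Type*} [Fintype ι] [Fintype κ] [Fintype σ]
    (f : ι → ℂ) (g : κ → ℂ) (h : σ → ℂ) :
    ∑ q : ι × κ × σ, f q.1 * g q.2.1 * h q.2.2
      = (∑ i, f i) * (∑ j, g j) * (∑ s, h s) := by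
  rw [Finset.sum_mul_sum, Finset.sum_mul_sum]
  simp only [Fintype.sum_prod_type, Finset.sum_mul, Finset.mul_sum]
  refine Finset.sum_congr rfl fun i _ => ?_
  rw [Finset.sum_comm]

lemma inner_tensor3_tensorLast {ι κ σ : Type*} [Fintype ι] [Fintype κ] [Fintype σ]
    (u y : EuclideanSpace ℂ ι) (z v : EuclideanSpace ℂ κ) (P Q : EuclideanSpace ℂ σ) :
    (inner ℂ (tensor3 u z P) (tensorLast (WithLp.toLp 2 (fun q : ι × κ => y q.1 * v q.2)) Q) : ℂ)
      = (inner ℂ u y : ℂ) * (inner ℂ z v : ℂ) * (inner ℂ P Q : ℂ) := by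
  simp only [PiLp.inner_apply, RCLike.inner_apply, tensor3, tensorLast, PiLp.toLp_apply]
  rw [← sum_factor3 (fun i => y i * conj (u i)) (fun j => v j * conj (z j))
    (fun s => Q s * conj (P s))]
  refine Finset.sum_congr rfl fun q _ => by simp only [map_mul]; ring


/-- Phase covariance forbids universal superposition with a fixed component:
if the output of a linear map on `(e^{iθ}φ)^{⊗k} ⊗ Σ ⊗ P₀` is proportional to
`√p₀ √(r θ) (α e^{inθ} φ^{⊗n} + β Φ) ⊗ w ⊗ P₁ + √p₁ Φ̃(θ)` for all phases `θ`,
with `Φ̃(θ)` orthogonal to the success subspace and `αβ ≠ 0`, while the map is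
also phase-covariant, then a contradiction arises when `φ^{⊗n}` and `Φ` are
linearly independent. -/
theorem phase_covariance_no_fixed_component {d k n a a' p : ℕ} (hd : 2 ≤ d)
    (φ : EuclideanSpace ℂ (Fin d)) (hφ : ‖φ‖ = 1)
    (anc : EuclideanSpace ℂ (Fin a)) (hanc : ‖anc‖ = 1)
    (P₀ P₁ : EuclideanSpace ℂ (Fin p)) (hP₀ : ‖P₀‖ = 1) (hP₁ : ‖P₁‖ = 1)
    (hP : (inner ℂ P₀ P₁ : ℂ) = 0)
    (w : EuclideanSpace ℂ (Fin a')) (hw : ‖w‖ = 1)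
    (Φ : EuclideanSpace ℂ (Fin n → Fin d)) (hΦ : ‖Φ‖ = 1)
    (hlin : LinearIndependent ℂ ![tpow n φ, Φ])
    (α β : ℂ) (hα : α ≠ 0) (hβ : β ≠ 0) (hnorm : ‖α‖ ^ 2 + ‖β‖ ^ 2 = 1)
    (p₀ p₁ : ℝ) (hp₀ : 0 < p₀) (hp : p₀ + p₁ = 1)
    (r : ℝ → ℝ) (hr : ∀ θ, 0 < r θ)
    (Φt : ℝ → EuclideanSpace ℂ ((Fin n → Fin d) × Fin a' × Fin p))
    (U : EuclideanSpace ℂ ((Fin k → Fin d) × Fin a × Fin p) →ₗ[ℂ]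
      EuclideanSpace ℂ ((Fin n → Fin d) × Fin a' × Fin p))
    (horth : ∀ θ (v : EuclideanSpace ℂ ((Fin n → Fin d) × Fin a')),
      (inner ℂ (Φt θ) (tensorLast v P₁) : ℂ) = 0)
    (hmain : ∀ θ : ℝ, ∃ c : ℂ, c ≠ 0 ∧
      U (tensor3 (tpow k (Complex.exp (θ * Complex.I) • φ)) anc P₀) =
        c • (Real.sqrt p₀ • Real.sqrt (r θ) •
            tensor3 ((α * Complex.exp ((n : ℂ) * θ * Complex.I)) • tpow n φ + β • Φ)
              w P₁
          + Real.sqrt p₁ • Φt θ))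
    (hphase : ∀ θ : ℝ,
      U (tensor3 (tpow k (Complex.exp (θ * Complex.I) • φ)) anc P₀) =
        Complex.exp ((k : ℂ) * θ * Complex.I) •
          U (tensor3 (tpow k φ) anc P₀)) :
    False := by
  classical
  -- n = 0 is impossible by linear independence
  rcases Nat.eq_zero_or_pos n with hn0 | hn0
  · subst hn0
    have hcard := hlin.fintype_card_le_finrank
    simp [finrank_euclideanSpace] at hcard
  -- abbreviations
  set T : EuclideanSpace ℂ (Fin n → Fin d) := tpow n φ with hT
  set θ : ℝ := Real.pi / n with hθ
  obtain ⟨c₁, hc₁, hU₁⟩ := hmain θ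
  obtain ⟨c₀, hc₀, hU₀⟩ := hmain 0
  -- simplify hU₀
  have h0 : ((0 : ℝ) : ℂ) * Complex.I = 0 := by simp
  rw [show Complex.exp (((0:ℝ):ℂ) * Complex.I) = 1 by rw [h0, Complex.exp_zero],
    one_smul] at hU₀
  have hexp0 : Complex.exp ((n : ℂ) * ((0:ℝ):ℂ) * Complex.I) = 1 := by
    simp
  rw [hexp0, mul_one] at hU₀
  -- phase covariance gives the key equation
  have hkey : c₁ • (Real.sqrt p₀ • Real.sqrt (r θ) •
        tensor3 ((α * Complex.exp ((n : ℂ) * θ * Complex.I)) • T + β • Φ) w P₁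
        + Real.sqrt p₁ • Φt θ)
      = Complex.exp ((k : ℂ) * θ * Complex.I) •
        (c₀ • (Real.sqrt p₀ • Real.sqrt (r 0) • tensor3 (α • T + β • Φ) w P₁
          + Real.sqrt p₁ • Φt 0)) := by
    rw [← hU₁, ← hU₀, hphase θ]
  -- inner products with tensorLast (y ⊗ w) P₁
  have hww : (inner ℂ w w : ℂ) = 1 := by
    rw [inner_self_eq_norm_sq_to_K, hw]; norm_num
  have hPP : (inner ℂ P₁ P₁ : ℂ) = 1 := by
    rw [inner_self_eq_norm_sq_to_K, hP₁]; norm_num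
  have hin : ∀ (X : EuclideanSpace ℂ (Fin n → Fin d)) (cc : ℂ) (rr : ℝ) (Ψ : EuclideanSpace ℂ ((Fin n → Fin d) × Fin a' × Fin p))
      (hΨ : ∀ v, (inner ℂ Ψ (tensorLast v P₁) : ℂ) = 0)
      (y : EuclideanSpace ℂ (Fin n → Fin d)),
      (inner ℂ (cc • (Real.sqrt p₀ • Real.sqrt rr • tensor3 X w P₁ + Real.sqrt p₁ • Ψ))
        (tensorLast (WithLp.toLp 2 (fun q : (Fin n → Fin d) × Fin a' => y q.1 * w q.2)) P₁) : ℂ)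
      = conj cc * ((Real.sqrt p₀ : ℂ) * (Real.sqrt rr : ℂ) * (inner ℂ X y : ℂ)) := by
    intro X cc rr Ψ hΨ y
    rw [inner_smul_left, inner_add_left]
    rw [RCLike.real_smul_eq_coe_smul (K := ℂ), inner_smul_left]
    rw [RCLike.real_smul_eq_coe_smul (K := ℂ), inner_smul_left]
    rw [RCLike.real_smul_eq_coe_smul (K := ℂ) (Real.sqrt p₁), inner_smul_left]
    rw [hΨ, inner_tensor3_tensorLast, hww, hPP]
    simp only [RCLike.conj_ofReal, Complex.conj_ofReal, mul_zero, mul_one, Complex.coe_algebraMap,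
      RCLike.ofReal_mul]
    push_cast
    ring
  -- apply to both sides of hkey
  have hEq : ∀ y : EuclideanSpace ℂ (Fin n → Fin d),
      conj c₁ * ((Real.sqrt p₀ : ℂ) * (Real.sqrt (r θ) : ℂ) *
        (inner ℂ ((α * Complex.exp ((n : ℂ) * θ * Complex.I)) • T + β • Φ) y : ℂ))
      = conj (Complex.exp ((k : ℂ) * θ * Complex.I)) * (conj c₀ *
          ((Real.sqrt p₀ : ℂ) * (Real.sqrt (r 0) : ℂ) * (inner ℂ (α • T + β • Φ) y : ℂ))) := by
    intro y
    have h1 := congrArg (fun v : EuclideanSpace ℂ ((Fin n → Fin d) × Fin a' × Fin p) =>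
      (inner ℂ v (tensorLast (WithLp.toLp 2 (fun q : (Fin n → Fin d) × Fin a' => y q.1 * w q.2)) P₁) : ℂ)) hkey
    simp only at h1
    rw [hin _ c₁ (r θ) (Φt θ) (horth θ) y] at h1
    rw [inner_smul_left, hin _ c₀ (r 0) (Φt 0) (horth 0) y] at h1
    exact h1
  -- nonzero scalars
  have hs₀ : (Real.sqrt p₀ : ℂ) ≠ 0 := by
    exact_mod_cast ne_of_gt (Real.sqrt_pos.mpr hp₀)
  have hsθ : (Real.sqrt (r θ) : ℂ) ≠ 0 := by
    exact_mod_cast ne_of_gt (Real.sqrt_pos.mpr (hr θ))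
  have hs0' : (Real.sqrt (r 0) : ℂ) ≠ 0 := by
    exact_mod_cast ne_of_gt (Real.sqrt_pos.mpr (hr 0))
  have hc₁' : conj c₁ ≠ 0 := by simpa using hc₁
  -- extract proportionality of the vectors
  set μ : ℂ := conj (conj (Complex.exp ((k : ℂ) * θ * Complex.I)) * conj c₀ *
      (Real.sqrt (r 0) : ℂ) / (conj c₁ * (Real.sqrt (r θ) : ℂ))) with hμ
  have hvec : (α * Complex.exp ((n : ℂ) * θ * Complex.I)) • T + β • Φ
      = μ • (α • T + β • Φ) := by
    apply ext_inner_right ℂ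
    intro y
    have h2 := hEq y
    rw [inner_smul_left, hμ, Complex.conj_conj]
    have h2' : conj c₁ * ((Real.sqrt (r θ) : ℂ) *
        (inner ℂ ((α * Complex.exp ((n : ℂ) * θ * Complex.I)) • T + β • Φ) y : ℂ))
        = conj (Complex.exp ((k : ℂ) * θ * Complex.I)) * (conj c₀ *
          ((Real.sqrt (r 0) : ℂ) * (inner ℂ (α • T + β • Φ) y : ℂ))) := by
      apply mul_left_cancel₀ hs₀
      linear_combination h2
    rw [div_mul_eq_mul_div, eq_div_iff (mul_ne_zero hc₁' hsθ)]
    linear_combination h2'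
  -- use linear independence
  set e : ℂ := Complex.exp ((n : ℂ) * θ * Complex.I) with he
  have hz : (α * e - μ * α) • T + (β - μ * β) • Φ = 0 := by
    have hstep : (α * e - μ * α) • T + (β - μ * β) • Φ
        = ((α * e) • T + β • Φ) - μ • (α • T + β • Φ) := by
      module
    rw [hstep, hvec, sub_self]
  have hcoef := Fintype.linearIndependent_iff.mp hlin
    ![α * e - μ * α, β - μ * β] (by
      simpa [Fin.sum_univ_two] using hz)
  have hb' : β - μ * β = 0 := by simpa using hcoef 1
  have hμ1 : μ = 1 := by
    have hb2 : β * (1 - μ) = 0 := by linear_combination hb'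
    rcases mul_eq_zero.mp hb2 with h | h
    · exact absurd h hβ
    · linear_combination -h
  have ha' : α * e - μ * α = 0 := by simpa using hcoef 0
  have he1 : e = 1 := by
    rw [hμ1] at ha'
    have : α * (e - 1) = 0 := by linear_combination ha'
    rcases mul_eq_zero.mp this with h | h
    · exact absurd h hα
    · exact sub_eq_zero.mp h
  -- but e = exp(π i) = -1
  have hne : ((n : ℂ)) ≠ 0 := Nat.cast_ne_zero.mpr hn0.ne'
  have harg : (n : ℂ) * (θ : ℂ) = (Real.pi : ℂ) := by
    rw [hθ]
    push_cast
    field_simp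
  have : e = -1 := by
    rw [he, harg, Complex.exp_pi_mul_I]
  rw [he1] at this
  norm_num at this
end

section
/- For unit vectors ψ_i, ψ_j in a complex Hilbert space with overlap a_{ij} = ⟨ψ_i, ψ_j⟩, define D_{ij,t} = 2(1 − |a_{ij}|^t). Suppose nonnegative reals p_{is}, q_{iℓ} with Σ_s p_{is} + Σ_ℓ q_{iℓ} = 1 for each i, complex numbers α_{is}, β_{is} with |α_{is}|² + |β_{is}|² = 1, positive reals r_{is}, and complex λ_{ij,s} satisfy |a_{ij}|^k ≤ Σ_s √(p_{is}p_{js})(√(r_{is}r_{js})|α_{is}α_{js}||a_{ij}|^s + |α_{is}β_{js}λ_{ij,s}| + |β_{is}α_{js}λ_{ji,s}| + |β_{is}β_{js}|) + Σ_ℓ √(q_{iℓ}q_{jℓ}). Then D_{ij,k} ≥ Σ_s p̄_{ij,s}[ᾱ_{ij,s}(r̄_{ij,s} D_{ij,s}²/2 − 2r̄_{ij,s} + 2) − 2 max{|λ_{ij,s}|, |λ_{ji,s}|}] where p̄_{ij,s} = (p_{is}+p_{js})/2, ᾱ_{ij,s} = |α_{is}α_{js}|, r̄_{ij,s} = √(r_{is}r_{js}).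 -/
open Finset

/-- Entrywise efficiency bound for probabilistic cloning-type transformations:
from the inner-product consistency inequality one derives the metric bound on
`D_{ij,k} = 2(1 − |⟨ψᵢ,ψⱼ⟩|^k)`. -/
theorem cloning_metric_bound {E : Type*} [NormedAddCommGroup E]
    [InnerProductSpace ℂ E] (ψi ψj : E) (hψi : ‖ψi‖ = 1) (hψj : ‖ψj‖ = 1)
    (k S L : ℕ)
    (pI pJ qI qJ : ℕ → ℝ)
    (hpI : ∀ s, 0 ≤ pI s) (hpJ : ∀ s, 0 ≤ pJ s)
    (hqI : ∀ l, 0 ≤ qI l) (hqJ : ∀ l, 0 ≤ qJ l)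
    (hsumI : (∑ s ∈ range S, pI s) + (∑ l ∈ range L, qI l) = 1)
    (hsumJ : (∑ s ∈ range S, pJ s) + (∑ l ∈ range L, qJ l) = 1)
    (αI αJ βI βJ : ℕ → ℂ)
    (hαI : ∀ s, ‖αI s‖ ^ 2 + ‖βI s‖ ^ 2 = 1)
    (hαJ : ∀ s, ‖αJ s‖ ^ 2 + ‖βJ s‖ ^ 2 = 1)
    (rI rJ : ℕ → ℝ) (hrI : ∀ s, 0 < rI s) (hrJ : ∀ s, 0 < rJ s)
    (lamIJ lamJI : ℕ → ℂ)
    (hmain : ‖(inner ℂ ψi ψj : ℂ)‖ ^ k ≤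
      (∑ s ∈ range S, Real.sqrt (pI s * pJ s) *
        (Real.sqrt (rI s * rJ s) * (‖αI s‖ * ‖αJ s‖) *
            ‖(inner ℂ ψi ψj : ℂ)‖ ^ (s + 1)
          + ‖αI s‖ * ‖βJ s‖ * ‖lamIJ s‖
          + ‖βI s‖ * ‖αJ s‖ * ‖lamJI s‖
          + ‖βI s‖ * ‖βJ s‖)) +
      ∑ l ∈ range L, Real.sqrt (qI l * qJ l)) :
    (∑ s ∈ range S, ((pI s + pJ s) / 2) *
        ((‖αI s‖ * ‖αJ s‖) *
            (Real.sqrt (rI s * rJ s) * (2 * (1 - ‖(inner ℂ ψi ψj : ℂ)‖ ^ (s + 1))) ^ 2 / 2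
              - 2 * Real.sqrt (rI s * rJ s) + 2)
          - 2 * max ‖lamIJ s‖ ‖lamJI s‖)) ≤
      2 * (1 - ‖(inner ℂ ψi ψj : ℂ)‖ ^ k) := by
  set A : ℝ := ‖(inner ℂ ψi ψj : ℂ)‖ with hAdef
  have hA0 : 0 ≤ A := norm_nonneg _
  have hA1 : A ≤ 1 := by
    have h := norm_inner_le_norm (𝕜 := ℂ) ψi ψj
    rw [hψi, hψj] at h
    simpa [hAdef] using h
  have hpow1 : ∀ n : ℕ, A ^ n ≤ 1 := fun n => pow_le_one₀ hA0 hA1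
  have hpow0 : ∀ n : ℕ, 0 ≤ A ^ n := fun n => pow_nonneg hA0 n
  -- AM–GM
  have amgm : ∀ x y : ℝ, 0 ≤ x → 0 ≤ y → Real.sqrt (x * y) ≤ (x + y) / 2 := by
    intro x y hx hy
    rw [Real.sqrt_mul hx]
    nlinarith [sq_nonneg (Real.sqrt x - Real.sqrt y), Real.sq_sqrt hx, Real.sq_sqrt hy,
      Real.sqrt_nonneg x, Real.sqrt_nonneg y]
  -- q-sum bound
  have hq : ∑ l ∈ range L, Real.sqrt (qI l * qJ l) ≤
      1 - ∑ s ∈ range S, (pI s + pJ s) / 2 := by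
    have h1 : ∑ l ∈ range L, Real.sqrt (qI l * qJ l) ≤
        ∑ l ∈ range L, (qI l + qJ l) / 2 :=
      Finset.sum_le_sum fun l _ => amgm _ _ (hqI l) (hqJ l)
    have e1 : ∑ l ∈ range L, (qI l + qJ l) / 2 =
        ((∑ l ∈ range L, qI l) + ∑ l ∈ range L, qJ l) / 2 := by
      rw [← Finset.sum_add_distrib, Finset.sum_div]
    have e2 : ∑ s ∈ range S, (pI s + pJ s) / 2 =
        ((∑ s ∈ range S, pI s) + ∑ s ∈ range S, pJ s) / 2 := by
      rw [← Finset.sum_add_distrib, Finset.sum_div]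
    rw [e1] at h1
    rw [e2]
    linarith
  -- termwise bound on the p-sum
  have hp : ∑ s ∈ range S, Real.sqrt (pI s * pJ s) *
        (Real.sqrt (rI s * rJ s) * (‖αI s‖ * ‖αJ s‖) * A ^ (s + 1)
          + ‖αI s‖ * ‖βJ s‖ * ‖lamIJ s‖
          + ‖βI s‖ * ‖αJ s‖ * ‖lamJI s‖
          + ‖βI s‖ * ‖βJ s‖) ≤
      ∑ s ∈ range S, ((pI s + pJ s) / 2) *
        (Real.sqrt (rI s * rJ s) * (‖αI s‖ * ‖αJ s‖) * A ^ (s + 1)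
          + max ‖lamIJ s‖ ‖lamJI s‖ + 1 - ‖αI s‖ * ‖αJ s‖) := by
    apply Finset.sum_le_sum
    intro s _
    have haI : 0 ≤ ‖αI s‖ := norm_nonneg _
    have haJ : 0 ≤ ‖αJ s‖ := norm_nonneg _
    have hbI : 0 ≤ ‖βI s‖ := norm_nonneg _
    have hbJ : 0 ≤ ‖βJ s‖ := norm_nonneg _
    have hr0 : 0 ≤ Real.sqrt (rI s * rJ s) := Real.sqrt_nonneg _
    have hl1 : ‖lamIJ s‖ ≤ max ‖lamIJ s‖ ‖lamJI s‖ := le_max_left _ _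
    have hl2 : ‖lamJI s‖ ≤ max ‖lamIJ s‖ ‖lamJI s‖ := le_max_right _ _
    have hM0 : 0 ≤ max ‖lamIJ s‖ ‖lamJI s‖ := le_trans (norm_nonneg _) hl1
    have h1s : ‖αI s‖ * ‖βJ s‖ + ‖βI s‖ * ‖αJ s‖ ≤ 1 := by
      nlinarith [sq_nonneg (‖αI s‖ - ‖βJ s‖), sq_nonneg (‖βI s‖ - ‖αJ s‖), hαI s, hαJ s]
    have h2s : ‖αI s‖ * ‖αJ s‖ + ‖βI s‖ * ‖βJ s‖ ≤ 1 := by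
      nlinarith [sq_nonneg (‖αI s‖ - ‖αJ s‖), sq_nonneg (‖βI s‖ - ‖βJ s‖), hαI s, hαJ s]
    have hbr0 : 0 ≤ Real.sqrt (rI s * rJ s) * (‖αI s‖ * ‖αJ s‖) * A ^ (s + 1)
          + ‖αI s‖ * ‖βJ s‖ * ‖lamIJ s‖
          + ‖βI s‖ * ‖αJ s‖ * ‖lamJI s‖
          + ‖βI s‖ * ‖βJ s‖ := by positivity
    have hbrB : Real.sqrt (rI s * rJ s) * (‖αI s‖ * ‖αJ s‖) * A ^ (s + 1)
          + ‖αI s‖ * ‖βJ s‖ * ‖lamIJ s‖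
          + ‖βI s‖ * ‖αJ s‖ * ‖lamJI s‖
          + ‖βI s‖ * ‖βJ s‖ ≤
        Real.sqrt (rI s * rJ s) * (‖αI s‖ * ‖αJ s‖) * A ^ (s + 1)
          + max ‖lamIJ s‖ ‖lamJI s‖ + 1 - ‖αI s‖ * ‖αJ s‖ := by
      nlinarith [mul_le_mul_of_nonneg_left hl1 (mul_nonneg haI hbJ),
        mul_le_mul_of_nonneg_left hl2 (mul_nonneg hbI haJ),
        mul_le_mul_of_nonneg_right h1s hM0]
    have hsp : Real.sqrt (pI s * pJ s) ≤ (pI s + pJ s) / 2 :=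
      amgm _ _ (hpI s) (hpJ s)
    have hp0 : 0 ≤ (pI s + pJ s) / 2 := by
      have := hpI s; have := hpJ s; linarith
    calc Real.sqrt (pI s * pJ s) *
          (Real.sqrt (rI s * rJ s) * (‖αI s‖ * ‖αJ s‖) * A ^ (s + 1)
            + ‖αI s‖ * ‖βJ s‖ * ‖lamIJ s‖
            + ‖βI s‖ * ‖αJ s‖ * ‖lamJI s‖
            + ‖βI s‖ * ‖βJ s‖)
        ≤ ((pI s + pJ s) / 2) *
          (Real.sqrt (rI s * rJ s) * (‖αI s‖ * ‖αJ s‖) * A ^ (s + 1)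
            + ‖αI s‖ * ‖βJ s‖ * ‖lamIJ s‖
            + ‖βI s‖ * ‖αJ s‖ * ‖lamJI s‖
            + ‖βI s‖ * ‖βJ s‖) := mul_le_mul_of_nonneg_right hsp hbr0
      _ ≤ _ := mul_le_mul_of_nonneg_left hbrB hp0
  -- key inequality
  have hkey : A ^ k ≤
      (∑ s ∈ range S, ((pI s + pJ s) / 2) *
        (Real.sqrt (rI s * rJ s) * (‖αI s‖ * ‖αJ s‖) * A ^ (s + 1)
          + max ‖lamIJ s‖ ‖lamJI s‖ + 1 - ‖αI s‖ * ‖αJ s‖))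
      + (1 - ∑ s ∈ range S, (pI s + pJ s) / 2) := by
    calc A ^ k ≤ _ := hmain
      _ ≤ _ := add_le_add hp hq
  -- termwise comparison with the goal
  have hterm : ∑ s ∈ range S, ((pI s + pJ s) / 2) *
        ((‖αI s‖ * ‖αJ s‖) *
            (Real.sqrt (rI s * rJ s) * (2 * (1 - A ^ (s + 1))) ^ 2 / 2
              - 2 * Real.sqrt (rI s * rJ s) + 2)
          - 2 * max ‖lamIJ s‖ ‖lamJI s‖) ≤
      ∑ s ∈ range S, ((pI s + pJ s) / 2) *
        (2 - 2 * (Real.sqrt (rI s * rJ s) * (‖αI s‖ * ‖αJ s‖) * A ^ (s + 1)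
          + max ‖lamIJ s‖ ‖lamJI s‖ + 1 - ‖αI s‖ * ‖αJ s‖)) := by
    apply Finset.sum_le_sum
    intro s _
    have hp0 : 0 ≤ (pI s + pJ s) / 2 := by
      have := hpI s; have := hpJ s; linarith
    apply mul_le_mul_of_nonneg_left _ hp0
    have hα0 : 0 ≤ ‖αI s‖ * ‖αJ s‖ := mul_nonneg (norm_nonneg _) (norm_nonneg _)
    have hr0 : 0 ≤ Real.sqrt (rI s * rJ s) := Real.sqrt_nonneg _
    have hx1 : A ^ (s + 1) ≤ 1 := hpow1 (s + 1)
    have hx0 : 0 ≤ A ^ (s + 1) := hpow0 (s + 1)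
    nlinarith [mul_nonneg (mul_nonneg hα0 hr0)
      (mul_nonneg hx0 (by linarith : (0:ℝ) ≤ 1 - A ^ (s + 1)))]
  -- rewrite the RHS of hterm
  have hsplit : ∑ s ∈ range S, ((pI s + pJ s) / 2) *
        (2 - 2 * (Real.sqrt (rI s * rJ s) * (‖αI s‖ * ‖αJ s‖) * A ^ (s + 1)
          + max ‖lamIJ s‖ ‖lamJI s‖ + 1 - ‖αI s‖ * ‖αJ s‖)) =
      2 * (∑ s ∈ range S, (pI s + pJ s) / 2)
        - 2 * ∑ s ∈ range S, ((pI s + pJ s) / 2) *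
          (Real.sqrt (rI s * rJ s) * (‖αI s‖ * ‖αJ s‖) * A ^ (s + 1)
            + max ‖lamIJ s‖ ‖lamJI s‖ + 1 - ‖αI s‖ * ‖αJ s‖) := by
    rw [Finset.mul_sum, Finset.mul_sum, ← Finset.sum_sub_distrib]
    exact Finset.sum_congr rfl fun s _ => by ring
  calc (∑ s ∈ range S, ((pI s + pJ s) / 2) *
        ((‖αI s‖ * ‖αJ s‖) *
            (Real.sqrt (rI s * rJ s) * (2 * (1 - A ^ (s + 1))) ^ 2 / 2
              - 2 * Real.sqrt (rI s * rJ s) + 2)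
          - 2 * max ‖lamIJ s‖ ‖lamJI s‖))
      ≤ _ := hterm
    _ = _ := hsplit
    _ ≤ 2 * (1 - A ^ k) := by linarith
end
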